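/- arXiv:2605.02686 — 2 statements merged into one kernel-verified Lean document; each statement's English description precedes it below -/
import Mathlib

section
/- Let z be a point of the hyperbolic plane (the upper half-plane with its hyperbolic metric), let T ≥ 0, and let S be a set of points of the upper half-plane contained in the closed ball of radius T around z, such that any two distinct points of S are at hyperbolic distance at least log 3 from each other. Then S is finite and has cardinality at most 6·e^T. -/
open Metric Set

section HyperbolicPackingHelpers
open Real MeasureTheory intervalIntegral

noncomputable def FF (a b u : ℝ) : ℝ :=
  -Real.sqrt ((u - a) * (b - u)) / u - Real.arcsin ((2*u - (a+b))/(b - a))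
    + ((a+b)/(2*Real.sqrt (a*b))) * Real.arcsin (((a+b)*u - 2*(a*b))/((b-a)*u))

lemma FF_cont (a b : ℝ) (ha : 0 < a) (hab : a < b) :
    ContinuousOn (FF a b) (Icc a b) := by
  have hba : 0 < b - a := by linarith
  apply ContinuousOn.add
  · apply ContinuousOn.sub
    · apply ContinuousOn.div
      · exact (((continuousOn_id.sub continuousOn_const).mul
          (continuousOn_const.sub continuousOn_id)).sqrt).neg
      · exact continuousOn_id
      · intro x hx; exact ne_of_gt (lt_of_lt_of_le ha hx.1)
    · exact Real.continuous_arcsin.comp_continuousOn (by fun_prop)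
  · apply ContinuousOn.mul continuousOn_const
    apply Real.continuous_arcsin.comp_continuousOn
    apply ContinuousOn.div (by fun_prop) (by fun_prop)
    intro x hx
    have hx0 : 0 < x := lt_of_lt_of_le ha hx.1
    positivity

lemma FF_deriv (a b : ℝ) (ha : 0 < a) (hab : a < b) (u : ℝ) (hu : u ∈ Ioo a b) :
    HasDerivAt (FF a b) (Real.sqrt ((u - a) * (b - u)) / u^2) u := by
  obtain ⟨hua, hub⟩ := hu
  have hu0 : 0 < u := ha.trans hua
  have hb : 0 < b := ha.trans hab
  have hP : 0 < (u - a) * (b - u) := mul_pos (by linarith) (by linarith)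
  have hba : 0 < b - a := by linarith
  have hsP : 0 < Real.sqrt ((u - a) * (b - u)) := Real.sqrt_pos.mpr hP
  have hs2 : Real.sqrt ((u - a) * (b - u)) ^ 2 = (u - a) * (b - u) := Real.sq_sqrt hP.le
  have hab0 : 0 < a * b := mul_pos ha hb
  have ht : 0 < Real.sqrt (a*b) := Real.sqrt_pos.mpr hab0
  have ht2 : Real.sqrt (a*b) ^ 2 = a * b := Real.sq_sqrt hab0.le
  set s := Real.sqrt ((u - a) * (b - u)) with hs
  set t := Real.sqrt (a*b) with htdef
  -- term 1 : -sqrt P / u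
  have hP' : HasDerivAt (fun u => (u - a) * (b - u)) (a + b - 2*u) u := by
    have h := (((hasDerivAt_id u).sub_const a).mul ((hasDerivAt_const u b).sub (hasDerivAt_id u)))
    simp only [id_eq] at h
    exact h.congr_deriv (by simp only [Pi.sub_apply, id_eq]; ring)
  have hsqrt : HasDerivAt (fun u => Real.sqrt ((u - a) * (b - u)))
      (1 / (2 * s) * (a + b - 2*u)) u :=
    (Real.hasDerivAt_sqrt hP.ne').comp u hP'
  have h1 := (hsqrt.neg).div (hasDerivAt_id u) hu0.ne'
  simp only [id_eq] at h1
  -- term 2 : arcsin g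
  have hg1 : (2*u - (a+b))/(b - a) ≠ -1 := by
    intro h; rw [div_eq_iff hba.ne'] at h; nlinarith
  have hg2 : (2*u - (a+b))/(b - a) ≠ 1 := by
    intro h; rw [div_eq_iff hba.ne'] at h; nlinarith
  have hginner : HasDerivAt (fun u => (2*u - (a+b))/(b - a)) (2*1/(b-a)) u := by
    have h := (((hasDerivAt_id u).const_mul 2).sub_const (a+b)).div_const (b-a)
    simpa only [id_eq] using h
  have h2 := (Real.hasDerivAt_arcsin hg1 hg2).comp u hginner
  have hg2eq : Real.sqrt (1 - ((2*u - (a+b))/(b - a)) ^ 2) = 2 * s / (b - a) := by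
    have h : 1 - ((2*u - (a+b))/(b - a)) ^ 2 = (2 * s / (b - a))^2 := by
      field_simp
      linear_combination (-4 : ℝ) * hs2
    rw [h, Real.sqrt_sq (by positivity)]
  rw [hg2eq] at h2
  -- term 3 : arcsin w
  have hbu : (b-a)*u ≠ 0 := by positivity
  have hw1 : ((a+b)*u - 2*(a*b))/((b-a)*u) ≠ -1 := by
    intro h; rw [div_eq_iff hbu] at h; nlinarith
  have hw2 : ((a+b)*u - 2*(a*b))/((b-a)*u) ≠ 1 := by
    intro h; rw [div_eq_iff hbu] at h; nlinarith
  have hwinner : HasDerivAt (fun u => ((a+b)*u - 2*(a*b))/((b-a)*u))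
      (((a+b)*1*((b-a)*u) - ((a+b)*u - 2*(a*b))*((b-a)*1))/((b-a)*u)^2) u := by
    have h := (((hasDerivAt_id u).const_mul (a+b)).sub_const (2*(a*b))).div
      ((hasDerivAt_id u).const_mul (b-a)) hbu
    simp only [id_eq] at h
    exact h
  have h3 := (Real.hasDerivAt_arcsin hw1 hw2).comp u hwinner
  have hw2eq : Real.sqrt (1 - (((a+b)*u - 2*(a*b))/((b-a)*u)) ^ 2)
      = 2 * t * s / ((b - a) * u) := by
    have h : 1 - (((a+b)*u - 2*(a*b))/((b-a)*u)) ^ 2 = (2 * t * s / ((b - a) * u))^2 := by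
      field_simp
      linear_combination (-4 * s^2) * ht2 - 4 * (a*b) * hs2
    rw [h, Real.sqrt_sq (by positivity)]
  rw [hw2eq] at h3
  have hsum := (h1.sub h2).add (h3.const_mul ((a+b)/(2*t)))
  refine hsum.congr_deriv (Eq.symm ?_)
  simp only [Pi.neg_apply, ← hs]
  field_simp
  linear_combination (2*u*(a+b)) * ht2

lemma key_integral (a b : ℝ) (ha : 0 < a) (hab : a < b) :
    ∫ u in a..b, Real.sqrt ((u - a) * (b - u)) / u^2
      = Real.pi * ((a+b)/(2*Real.sqrt (a*b)) - 1) := by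
  have hba : 0 < b - a := by linarith
  have hb : 0 < b := ha.trans hab
  have hint : IntervalIntegrable (fun u => Real.sqrt ((u - a) * (b - u)) / u^2) volume a b := by
    apply ContinuousOn.intervalIntegrable
    rw [Set.uIcc_of_le hab.le]
    apply ContinuousOn.div (by fun_prop) (by fun_prop)
    intro x hx
    have hx0 : 0 < x := lt_of_lt_of_le ha hx.1
    positivity
  have heq := intervalIntegral.integral_eq_sub_of_hasDeriv_right_of_le hab.le
    (FF_cont a b ha hab)
    (fun x hx => (FF_deriv a b ha hab x hx).hasDerivWithinAt) hint
  rw [heq]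
  unfold FF
  rw [show (2*b - (a+b))/(b - a) = 1 by rw [div_eq_one_iff_eq hba.ne']; ring,
      show (2*a - (a+b))/(b - a) = -1 by rw [div_eq_iff hba.ne']; ring,
      show ((a+b)*b - 2*(a*b))/((b-a)*b) = 1 by rw [div_eq_one_iff_eq (by positivity)]; ring,
      show ((a+b)*a - 2*(a*b))/((b-a)*a) = -1 by rw [div_eq_iff (by positivity)]; ring,
      Real.arcsin_one, Real.arcsin_neg_one]
  rw [show (b - a) * (b - b) = 0 by ring, show (a - a) * (b - a) = 0 by ring]
  rw [Real.sqrt_zero]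
  have ht : 0 < Real.sqrt (a*b) := Real.sqrt_pos.mpr (by positivity)
  field_simp
  ring


noncomputable def nu : Measure (ℝ × ℝ) :=
  (volume : Measure (ℝ × ℝ)).withDensity (fun q => ENNReal.ofReal ((q.2 ^ 2)⁻¹))

def Disk (c₁ c₂ ρ : ℝ) : Set (ℝ × ℝ) := {q | (q.1 - c₁)^2 + (q.2 - c₂)^2 ≤ ρ^2}

lemma disk_measurable (c₁ c₂ ρ : ℝ) : MeasurableSet (Disk c₁ c₂ ρ) :=
  (isClosed_le (by fun_prop) continuous_const).measurableSet

lemma nu_disk (c₁ c₂ ρ : ℝ) (hρ : 0 < ρ) (hc : ρ < c₂) :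
    nu (Disk c₁ c₂ ρ)
      = ENNReal.ofReal (2 * Real.pi * (c₂ / Real.sqrt ((c₂-ρ)*(c₂+ρ)) - 1)) := by
  set a := c₂ - ρ with hadef
  set b := c₂ + ρ with hbdef
  have ha : 0 < a := by simp [hadef]; linarith
  have hab : a < b := by simp [hadef, hbdef]; linarith
  have hb : 0 < b := ha.trans hab
  have hmeas : MeasurableSet (Disk c₁ c₂ ρ) := disk_measurable _ _ _
  have hkey : ∀ y : ℝ, ρ^2 - (y - c₂)^2 = (y - a)*(b - y) := fun y => by
    rw [hadef, hbdef]; ring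
  have hf : Measurable (fun q : ℝ × ℝ => ENNReal.ofReal ((q.2 ^ 2)⁻¹)) := by fun_prop
  rw [nu, withDensity_apply _ hmeas, ← lintegral_indicator hmeas]
  rw [Measure.volume_eq_prod]
  rw [lintegral_prod_symm' _ (hf.indicator hmeas)]
  have hslice : ∀ y : ℝ,
      (∫⁻ x, (Disk c₁ c₂ ρ).indicator (fun q : ℝ × ℝ => ENNReal.ofReal ((q.2 ^ 2)⁻¹)) (x, y))
        = (Icc a b).indicator
            (fun y => ENNReal.ofReal ((y ^ 2)⁻¹ * (2 * Real.sqrt ((y - a) * (b - y))))) y := by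
    intro y
    by_cases hy : y ∈ Icc a b
    · have hyP : 0 ≤ (y - a) * (b - y) := mul_nonneg (by linarith [hy.1]) (by linarith [hy.2])
      have hy0 : 0 < y := lt_of_lt_of_le ha hy.1
      set r := Real.sqrt ((y - a) * (b - y)) with hrdef
      have hr2 : r ^ 2 = (y - a) * (b - y) := Real.sq_sqrt hyP
      have hr0 : 0 ≤ r := Real.sqrt_nonneg _
      have hset : (fun x => (Disk c₁ c₂ ρ).indicator
            (fun q : ℝ × ℝ => ENNReal.ofReal ((q.2 ^ 2)⁻¹)) (x, y))
          = (Icc (c₁ - r) (c₁ + r)).indicator (fun _ => ENNReal.ofReal ((y ^ 2)⁻¹)) := by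
        funext x
        have hmem : ((x, y) ∈ Disk c₁ c₂ ρ) ↔ x ∈ Icc (c₁ - r) (c₁ + r) := by
          simp only [Disk, mem_setOf_eq, mem_Icc]
          constructor
          · intro h
            have h1 : (x - c₁)^2 ≤ r^2 := by rw [hr2]; linarith [hkey y]
            have h2 := Real.sqrt_le_sqrt h1
            rw [Real.sqrt_sq_eq_abs, Real.sqrt_sq hr0] at h2
            have h3 := abs_le.mp h2
            exact ⟨by linarith [h3.1], by linarith [h3.2]⟩
          · intro ⟨h1, h2⟩
            have : (x - c₁)^2 ≤ r^2 := by
              have : |x - c₁| ≤ r := abs_le.mpr ⟨by linarith, by linarith⟩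
              calc (x - c₁)^2 = |x - c₁|^2 := (sq_abs _).symm
                _ ≤ r^2 := by nlinarith [abs_nonneg (x - c₁)]
            rw [hr2] at this; linarith [hkey y]
        by_cases hx : (x, y) ∈ Disk c₁ c₂ ρ
        · rw [indicator_of_mem hx, indicator_of_mem (hmem.mp hx)]
        · rw [indicator_of_notMem hx, indicator_of_notMem (fun h => hx (hmem.mpr h))]
      rw [hset, lintegral_indicator measurableSet_Icc, setLIntegral_const, Real.volume_Icc,
        indicator_of_mem hy]
      rw [show c₁ + r - (c₁ - r) = 2 * r by ring]
      rw [← ENNReal.ofReal_mul (by positivity)]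
    · have hyP : (y - a) * (b - y) < 0 := by
        rcases not_and_or.mp ((mem_Icc (a := a)).not.mp hy) with h | h
        · push_neg at h; nlinarith
        · push_neg at h; nlinarith
      have hset : (fun x => (Disk c₁ c₂ ρ).indicator
            (fun q : ℝ × ℝ => ENNReal.ofReal ((q.2 ^ 2)⁻¹)) (x, y))
          = fun _ => 0 := by
        funext x
        apply indicator_of_notMem
        simp only [Disk, mem_setOf_eq, not_le]
        linarith [hkey y, sq_nonneg (x - c₁)]
      rw [hset, lintegral_zero, indicator_of_notMem hy]
  simp_rw [hslice]
  rw [lintegral_indicator measurableSet_Icc]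
  have hInt : IntegrableOn (fun y => (y ^ 2)⁻¹ * (2 * Real.sqrt ((y - a) * (b - y)))) (Icc a b) volume := by
    apply ContinuousOn.integrableOn_compact isCompact_Icc
    apply ContinuousOn.mul
    · apply ContinuousOn.inv₀ (by fun_prop)
      intro x hx
      have hx0 : 0 < x := lt_of_lt_of_le ha hx.1
      positivity
    · fun_prop
  have hNN : 0 ≤ᵐ[volume.restrict (Icc a b)]
      (fun y => (y ^ 2)⁻¹ * (2 * Real.sqrt ((y - a) * (b - y)))) := by
    filter_upwards with y
    positivity
  rw [← MeasureTheory.ofReal_integral_eq_lintegral_ofReal hInt hNN]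
  · rw [MeasureTheory.integral_Icc_eq_integral_Ioc,
       ← intervalIntegral.integral_of_le hab.le]
    rw [show (fun y => (y ^ 2)⁻¹ * (2 * Real.sqrt ((y - a) * (b - y))))
        = fun y => 2 * (Real.sqrt ((y - a) * (b - y)) / y ^ 2) from funext fun y => by ring]
    rw [intervalIntegral.integral_const_mul, key_integral a b ha hab]
    congr 1
    have : a + b = 2 * c₂ := by rw [hadef, hbdef]; ring
    rw [this]
    have hs : 0 < Real.sqrt (a * b) := Real.sqrt_pos.mpr (by positivity)
    field_simp


open UpperHalfPlane in
lemma dist_le_iff_disk (p w : UpperHalfPlane) (t : ℝ) (ht : 0 ≤ t) :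
    dist w p ≤ t ↔
      (w.re - p.re)^2 + (w.im - Real.cosh t * p.im)^2 ≤ (Real.sinh t * p.im)^2 := by
  have hwp : 0 < w.im := w.im_pos
  have hpp : 0 < p.im := p.im_pos
  have hM : (0:ℝ) < 2 * w.im * p.im := by positivity
  have hd2 : dist (w : ℂ) p ^ 2 = (w.re - p.re)^2 + (w.im - p.im)^2 := by
    rw [Complex.dist_eq_re_im, Real.sq_sqrt (by positivity), coe_re, coe_re, coe_im, coe_im]
  have h1 : dist w p ≤ t ↔ Real.cosh (dist w p) ≤ Real.cosh t := by
    rw [Real.cosh_le_cosh, abs_of_nonneg dist_nonneg, abs_of_nonneg ht]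
  rw [h1, UpperHalfPlane.cosh_dist, hd2]
  have E : Real.cosh t ^ 2 - Real.sinh t ^ 2 - 1 = 0 := by
    linarith [Real.cosh_sq_sub_sinh_sq t]
  have iden : (w.re - p.re)^2 + (w.im - Real.cosh t * p.im)^2 - (Real.sinh t * p.im)^2
      = ((w.re - p.re)^2 + (w.im - p.im)^2) - 2*w.im*p.im*(Real.cosh t - 1)
        + (Real.cosh t^2 - Real.sinh t^2 - 1)*p.im^2 := by ring
  rw [E, zero_mul, add_zero] at iden
  constructor
  · intro h
    have h' : (w.re - p.re)^2 + (w.im - p.im)^2 ≤ (Real.cosh t - 1) * (2 * w.im * p.im) :=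
      (div_le_iff₀ hM).mp (by linarith)
    linarith [iden]
  · intro h
    have h' : ((w.re - p.re)^2 + (w.im - p.im)^2) / (2 * w.im * p.im) ≤ Real.cosh t - 1 :=
      (div_le_iff₀ hM).mpr (by linarith [iden])
    linarith

open UpperHalfPlane in
lemma dist_le_iff_disk' (p w : UpperHalfPlane) (t : ℝ) (ht : 0 ≤ t) :
    dist w p ≤ t ↔
      ((w.re, w.im) ∈ Disk p.re (Real.cosh t * p.im) (Real.sinh t * p.im)) := by
  rw [dist_le_iff_disk p w t ht]; rfl

lemma disk_pos (p : UpperHalfPlane) (t : ℝ) (ht : 0 ≤ t) (q : ℝ × ℝ)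
    (hq : q ∈ Disk p.re (Real.cosh t * p.im) (Real.sinh t * p.im)) : 0 < q.2 := by
  have hpp : 0 < p.im := p.im_pos
  have hC : 1 ≤ Real.cosh t := Real.one_le_cosh t
  have hS : 0 ≤ Real.sinh t := by rwa [← Real.sinh_nonneg_iff] at ht
  have E := Real.cosh_sq_sub_sinh_sq t
  simp only [Disk, Set.mem_setOf_eq] at hq
  by_contra h
  push_neg at h
  have h1 : Real.cosh t * p.im ≤ Real.cosh t * p.im - q.2 := by linarith
  have h2 : (Real.cosh t * p.im) * (Real.cosh t * p.im)
      ≤ (Real.cosh t * p.im - q.2) * (Real.cosh t * p.im - q.2) :=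
    mul_self_le_mul_self (by positivity) h1
  have E2 : (Real.cosh t^2 - Real.sinh t^2) * p.im^2 = p.im^2 := by rw [E, one_mul]
  nlinarith [hq, sq_nonneg (q.1 - p.re), mul_pos hpp hpp, h2, E2]

end HyperbolicPackingHelpers

section
open UpperHalfPlane MeasureTheory

/-- Packing estimate from the proof of Lemma 3.2: a set of points of the hyperbolic plane
(the upper half-plane with its hyperbolic metric) that is contained in the closed ball of
radius `T ≥ 0` around a point `z` and whose points are pairwise at distance at least
`log 3` is finite, with cardinality at most `6 · e^T`. -/
theorem hyperbolic_packing_bound (z : UpperHalfPlane) (T : ℝ) (hT : 0 ≤ T)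
    (S : Set UpperHalfPlane) (hS : S ⊆ Metric.closedBall z T)
    (hsep : ∀ x ∈ S, ∀ y ∈ S, x ≠ y → Real.log 3 ≤ dist x y) :
    S.Finite ∧ (S.ncard : ℝ) ≤ 6 * Real.exp T := by
  set r : ℝ := Real.log (12/7) with hrdef
  have hrpos : 0 < r := Real.log_pos (by norm_num)
  have hr0 : 0 ≤ r := hrpos.le
  have hexp : Real.exp r = 12/7 := Real.exp_log (by norm_num)
  have hcosh : Real.cosh r = 193/168 := by
    rw [Real.cosh_eq, Real.exp_neg, hexp]; norm_num
  have h2r : 2 * r < Real.log 3 := by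
    have h1 : Real.log ((12/7 : ℝ)^2) = 2 * Real.log (12/7) := by
      rw [Real.log_pow]; push_cast; ring
    have h2 : Real.log ((12/7 : ℝ)^2) < Real.log 3 :=
      Real.log_lt_log (by norm_num) (by norm_num)
    rw [h1] at h2; linarith
  set R : ℝ := T + r with hRdef
  have hR0 : 0 ≤ R := by positivity
  -- the disks
  set Dp : UpperHalfPlane → Set (ℝ × ℝ) :=
    fun p => Disk p.re (Real.cosh r * p.im) (Real.sinh r * p.im) with hDpdef
  set BigD : Set (ℝ × ℝ) := Disk z.re (Real.cosh R * z.im) (Real.sinh R * z.im) with hBigdef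
  have hsinh_pos : ∀ t : ℝ, 0 < t → 0 < Real.sinh t := fun t ht => by
    rwa [← Real.sinh_pos_iff] at ht
  have hsc : ∀ t : ℝ, Real.sinh t < Real.cosh t := Real.sinh_lt_cosh
  -- measure of a hyperbolic disk of radius t around p
  have hmeasval : ∀ (p : UpperHalfPlane) (t : ℝ), 0 < t →
      nu (Disk p.re (Real.cosh t * p.im) (Real.sinh t * p.im))
        = ENNReal.ofReal (2 * Real.pi * (Real.cosh t - 1)) := by
    intro p t ht
    have hpp : 0 < p.im := p.im_pos
    have hst : 0 < Real.sinh t := hsinh_pos t ht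
    have h1 : 0 < Real.sinh t * p.im := by positivity
    have h2 : Real.sinh t * p.im < Real.cosh t * p.im :=
      mul_lt_mul_of_pos_right (hsc t) hpp
    rw [nu_disk _ _ _ h1 h2]
    congr 1
    have E := Real.cosh_sq_sub_sinh_sq t
    have h3 : (Real.cosh t * p.im - Real.sinh t * p.im) * (Real.cosh t * p.im + Real.sinh t * p.im)
        = p.im ^ 2 := by linear_combination (p.im ^ 2) * E
    rw [h3, Real.sqrt_sq hpp.le]
    field_simp
  -- correspondence with hyperbolic balls
  have hlift : ∀ (p : UpperHalfPlane) (t : ℝ), 0 ≤ t → ∀ q : ℝ × ℝ,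
      q ∈ Disk p.re (Real.cosh t * p.im) (Real.sinh t * p.im) →
      ∃ w : UpperHalfPlane, (w.re, w.im) = q ∧ dist w p ≤ t := by
    intro p t ht q hq
    have hq2 : 0 < q.2 := disk_pos p t ht q hq
    refine ⟨⟨⟨q.1, q.2⟩, hq2⟩, rfl, ?_⟩
    rw [dist_le_iff_disk' p _ t ht]
    exact hq
  -- inclusion in the big disk
  have hsub : ∀ p ∈ S, Dp p ⊆ BigD := by
    intro p hp q hq
    obtain ⟨w, hw, hwp⟩ := hlift p r hr0 q hq
    have hpz : dist p z ≤ T := Metric.mem_closedBall.mp (hS hp)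
    have hwz : dist w z ≤ R := by
      calc dist w z ≤ dist w p + dist p z := dist_triangle w p z
        _ ≤ r + T := add_le_add hwp hpz
        _ = R := by rw [hRdef]; ring
    have := (dist_le_iff_disk' z w R hR0).mp hwz
    rwa [hw] at this
  -- disjointness
  have hdisj : ∀ p ∈ S, ∀ p' ∈ S, p ≠ p' → Disjoint (Dp p) (Dp p') := by
    intro p hp p' hp' hne
    rw [Set.disjoint_left]
    intro q hq hq'
    obtain ⟨w, hw, hwp⟩ := hlift p r hr0 q hq
    obtain ⟨w', hw', hwp'⟩ := hlift p' r hr0 q hq'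
    have hww : w = w' := by
      apply UpperHalfPlane.ext_re_im
      · have := congrArg Prod.fst (hw.trans hw'.symm); exact this
      · have := congrArg Prod.snd (hw.trans hw'.symm); exact this
    have : dist p p' ≤ 2 * r := by
      calc dist p p' ≤ dist p w + dist w p' := dist_triangle p w p'
        _ = dist w p + dist w' p' := by rw [dist_comm, hww]
        _ ≤ r + r := add_le_add hwp hwp'
        _ = 2 * r := by ring
    have hge := hsep p hp p' hp' hne
    linarith
  -- per-finset bound
  have key : ∀ F : Finset UpperHalfPlane, ↑F ⊆ S → (F.card : ℝ) ≤ 6 * Real.exp T := by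
    intro F hF
    have hdisjF : (↑F : Set UpperHalfPlane).PairwiseDisjoint Dp :=
      fun p hp p' hp' hne => hdisj p (hF hp) p' (hF hp') hne
    have hsum : nu (⋃ p ∈ F, Dp p) = ∑ p ∈ F, nu (Dp p) :=
      measure_biUnion_finset hdisjF (fun p _ => disk_measurable _ _ _)
    have hsumval : ∑ p ∈ F, nu (Dp p)
        = (F.card : ENNReal) * ENNReal.ofReal (2 * Real.pi * (Real.cosh r - 1)) := by
      rw [Finset.sum_congr rfl (fun p _ => hmeasval p r hrpos), Finset.sum_const,
        nsmul_eq_mul]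
    have hle : (F.card : ENNReal) * ENNReal.ofReal (2 * Real.pi * (Real.cosh r - 1))
        ≤ ENNReal.ofReal (2 * Real.pi * (Real.cosh R - 1)) := by
      rw [← hsumval, ← hsum]
      have hRpos : 0 < R := by positivity
      rw [← hmeasval z R hRpos, ← hBigdef]
      exact measure_mono (Set.iUnion₂_subset fun p hp => hsub p (hF hp))
    have hcard : (F.card : ℝ) * (2 * Real.pi * (Real.cosh r - 1))
        ≤ 2 * Real.pi * (Real.cosh R - 1) := by
      have h1 : 1 ≤ Real.cosh R := Real.one_le_cosh R
      rw [← ENNReal.ofReal_natCast, ← ENNReal.ofReal_mul (Nat.cast_nonneg F.card)] at hle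
      exact (ENNReal.ofReal_le_ofReal_iff (mul_nonneg (by positivity) (by linarith))).mp hle
    -- numeric estimates
    have hcoshR : Real.cosh R - 1 ≤ (6/7) * Real.exp T := by
      have h1 : Real.exp R = Real.exp T * (12/7) := by
        rw [hRdef, Real.exp_add, hexp]
      have h2 : Real.exp (-R) ≤ 1 := by
        rw [Real.exp_le_one_iff]; linarith
      have h3 : 1 ≤ Real.exp T := by
        rw [show (1:ℝ) = Real.exp 0 from (Real.exp_zero).symm]
        exact Real.exp_le_exp.mpr hT
      rw [Real.cosh_eq, h1]
      nlinarith
    have hpi : 0 < Real.pi := Real.pi_pos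
    have hexpT : 0 < Real.exp T := Real.exp_pos T
    rw [hcosh] at hcard
    nlinarith [hcard, hcoshR, mul_pos hpi hexpT]
  -- finiteness
  have hfin : S.Finite := by
    by_contra hinf
    obtain ⟨F, hFsub, hFcard⟩ :=
      Set.Infinite.exists_subset_card_eq hinf (⌈6 * Real.exp T⌉₊ + 1)
    have h1 := key F hFsub
    rw [hFcard] at h1
    have h2 : (6 * Real.exp T : ℝ) ≤ (⌈6 * Real.exp T⌉₊ : ℝ) := Nat.le_ceil _
    push_cast at h1
    linarith
  refine ⟨hfin, ?_⟩
  have h1 := key hfin.toFinset (by simp)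
  rwa [Set.ncard_eq_toFinset_card S hfin]

end
end

section
/- Let (Ω, 𝓕, μ) be a probability space, let 𝓕₀ ≤ 𝓕₁ ≤ … ≤ 𝓕ₙ ≤ 𝓕 be an increasing sequence of sub-σ-algebras, let B₁, …, Bₙ be events with B_t measurable with respect to 𝓕_t for each t, and let p₁, …, pₙ ∈ [0,1] be such that the conditional expectation of the indicator of B_t given 𝓕_{t−1} is at most p_t almost everywhere, for each t. Then for every natural number k, the probability that at least k of the events B₁, …, Bₙ occur is at most (p₁ + … + pₙ)^k / k!. -/
open MeasureTheory Finset

private lemma aux_pow (P q : ℝ) (hP : 0 ≤ P) (hq : 0 ≤ q) :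
    ∀ k : ℕ, P ^ (k + 1) + (k + 1 : ℝ) * q * P ^ k ≤ (P + q) ^ (k + 1) := by
  intro k
  induction k with
  | zero => simp
  | succ k ih =>
    have h1 : (0:ℝ) ≤ P ^ k := pow_nonneg hP k
    have hq2 : (0:ℝ) ≤ ((k:ℝ)+1) * q^2 * P^k := by positivity
    have h4 : (P + q) * (P ^ (k + 1) + ((k:ℝ) + 1) * q * P ^ k) ≤ (P + q) * (P + q) ^ (k+1) :=
      mul_le_mul_of_nonneg_left ih (by linarith)
    have e1 : (P + q) * (P ^ (k + 1) + ((k:ℝ) + 1) * q * P ^ k)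
        = P ^ (k+1+1) + (((k:ℝ)+1)+1) * q * P ^ (k+1) + ((k:ℝ)+1)*q^2*P^k := by ring
    have e2 : (P + q) ^ (k+1+1) = (P + q) * (P + q) ^ (k+1) := by ring
    rw [e1] at h4
    push_cast
    rw [e2]
    linarith

private lemma esymm_bound (p : ℕ → ℝ) :
    ∀ (s : Finset ℕ), (∀ t ∈ s, 0 ≤ p t) → ∀ k : ℕ,
      (k.factorial : ℝ) * ∑ S ∈ Finset.powersetCard k s, ∏ t ∈ S, p t
        ≤ (∑ t ∈ s, p t) ^ k := by
  intro s
  induction s using Finset.induction with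
  | empty =>
    intro _ k
    cases k with
    | zero => simp
    | succ k =>
      rw [Finset.powersetCard_eq_empty.mpr (by simp)]
      simp
  | insert a s ha ih =>
    intro hnn k
    have hpa : 0 ≤ p a := hnn a (mem_insert_self a s)
    have hnn' : ∀ t ∈ s, 0 ≤ p t := fun t ht => hnn t (mem_insert_of_mem ht)
    have hP : 0 ≤ ∑ t ∈ s, p t := Finset.sum_nonneg hnn'
    cases k with
    | zero => simp
    | succ k =>
      have hdisj : Disjoint (Finset.powersetCard (k+1) s)
          ((Finset.powersetCard k s).image (insert a)) := by
        rw [Finset.disjoint_left]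
        intro S hS hS'
        obtain ⟨T, hT, rfl⟩ := Finset.mem_image.mp hS'
        have : a ∈ s := (Finset.mem_powersetCard.mp hS).1 (mem_insert_self a T)
        exact ha this
      have hinj : ∀ T₁ ∈ Finset.powersetCard k s, ∀ T₂ ∈ Finset.powersetCard k s,
          insert a T₁ = insert a T₂ → T₁ = T₂ := by
        intro T₁ h₁ T₂ h₂ h
        have ha₁ : a ∉ T₁ := fun hx => ha ((Finset.mem_powersetCard.mp h₁).1 hx)
        have ha₂ : a ∉ T₂ := fun hx => ha ((Finset.mem_powersetCard.mp h₂).1 hx)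
        rw [← Finset.erase_insert ha₁, ← Finset.erase_insert ha₂, h]
      have hsplit : ∑ S ∈ Finset.powersetCard (k+1) (insert a s), ∏ t ∈ S, p t
          = (∑ S ∈ Finset.powersetCard (k+1) s, ∏ t ∈ S, p t)
            + p a * ∑ S ∈ Finset.powersetCard k s, ∏ t ∈ S, p t := by
        rw [Finset.powersetCard_succ_insert ha, Finset.sum_union hdisj,
          Finset.sum_image hinj, Finset.mul_sum]
        congr 1
        refine Finset.sum_congr rfl fun S hS => ?_
        have haS : a ∉ S := fun hx => ha ((Finset.mem_powersetCard.mp hS).1 hx)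
        rw [Finset.prod_insert haS]
      rw [hsplit, Finset.sum_insert ha]
      have ih1 := ih hnn' (k+1)
      have ih2 := ih hnn' k
      have haux := aux_pow (∑ t ∈ s, p t) (p a) hP hpa k
      have hfac : ((k+1).factorial : ℝ) = (k+1 : ℝ) * k.factorial := by
        rw [Nat.factorial_succ]; push_cast; ring
      rw [add_comm (∑ t ∈ s, p t) (p a)] at haux
      have hmul : (k+1 : ℝ) * (p a * ((k.factorial : ℝ) * ∑ S ∈ Finset.powersetCard k s, ∏ t ∈ S, p t))
          ≤ (k+1 : ℝ) * (p a * (∑ t ∈ s, p t) ^ k) := by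
        have : (0:ℝ) ≤ (k+1 : ℝ) := by positivity
        exact mul_le_mul_of_nonneg_left (mul_le_mul_of_nonneg_left ih2 hpa) this
      push_cast [hfac] at *
      linarith

/-- Probabilistic estimate underlying the bad-step bounds: if `B 1, …, B n` are events
adapted to an increasing sequence of sub-σ-algebras `𝓕 0 ≤ 𝓕 1 ≤ … ≤ 𝓕 n` of a
probability space, and the conditional probability of `B t` given `𝓕 (t-1)` is a.e. at
most `p t ∈ [0,1]`, then the probability that at least `k` of the events occur is at most
`(p 1 + ⋯ + p n)^k / k!`. -/
theorem prob_at_least_k_events {Ω : Type*} [m : MeasurableSpace Ω]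
    (μ : Measure Ω) [IsProbabilityMeasure μ] (n : ℕ)
    (𝓕 : ℕ → MeasurableSpace Ω)
    (hmono : ∀ i : ℕ, i < n → 𝓕 i ≤ 𝓕 (i + 1)) (hle : 𝓕 n ≤ m)
    (B : ℕ → Set Ω) (hB : ∀ t ∈ Finset.Icc 1 n, MeasurableSet[𝓕 t] (B t))
    (p : ℕ → ℝ) (hp : ∀ t ∈ Finset.Icc 1 n, p t ∈ Set.Icc (0 : ℝ) 1)
    (hcond : ∀ t ∈ Finset.Icc 1 n,
      ∀ᵐ ω ∂μ, (μ[(B t).indicator (fun _ => (1 : ℝ)) | 𝓕 (t - 1)]) ω ≤ p t)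
    (k : ℕ) :
    μ {ω | (k : ℝ) ≤ ∑ t ∈ Finset.Icc 1 n, (B t).indicator (fun _ => (1 : ℝ)) ω} ≤
      ENNReal.ofReal ((∑ t ∈ Finset.Icc 1 n, p t) ^ k / k.factorial) := by
  classical
  have hF : ∀ j, j ≤ n → ∀ i, i ≤ j → 𝓕 i ≤ 𝓕 j := by
    intro j
    induction j with
    | zero => intro _ i hi; rw [Nat.le_zero.mp hi]
    | succ j ih =>
      intro hjn i hi
      rcases Nat.eq_or_lt_of_le hi with h | h
      · rw [h]
      · exact le_trans (ih (by omega) i (by omega)) (hmono j (by omega))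
  have hFm : ∀ t, t ≤ n → 𝓕 t ≤ m := fun t ht => le_trans (hF n le_rfl t ht) hle
  have key : ∀ S : Finset ℕ, S ⊆ Finset.Icc 1 n →
      μ (⋂ t ∈ S, B t) ≤ ENNReal.ofReal (∏ t ∈ S, p t) := by
    intro S
    induction S using Finset.induction_on_max with
    | empty => intro _; simp
    | insert a s hmax ih =>
      intro hsub
      have ha_mem : a ∈ Finset.Icc 1 n := hsub (mem_insert_self a s)
      have ha1 : 1 ≤ a := (Finset.mem_Icc.mp ha_mem).1
      have han : a ≤ n := (Finset.mem_Icc.mp ha_mem).2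
      have hss : s ⊆ Finset.Icc 1 n := fun x hx => hsub (mem_insert_of_mem hx)
      have haS : a ∉ s := fun h => lt_irrefl a (hmax a h)
      set A : Set Ω := ⋂ t ∈ s, B t with hA
      have hAmeas : MeasurableSet[𝓕 (a-1)] A := by
        refine Finset.measurableSet_biInter s fun t ht => ?_
        have htI := hss ht
        exact hF (a-1) (by omega) t (by have := (Finset.mem_Icc.mp htI).1; have := hmax t ht; omega)
          _ (hB t htI)
      have hAm : MeasurableSet A := hFm (a-1) (by omega) _ hAmeas
      have hBa : MeasurableSet (B a) := hFm a han _ (hB a ha_mem)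
      have hInd : Integrable ((B a).indicator (fun _ => (1:ℝ))) μ :=
        (integrable_const 1).indicator hBa
      have h1 : ∫ ω in A, (B a).indicator (fun _ => (1:ℝ)) ω ∂μ = (μ (A ∩ B a)).toReal := by
        rw [setIntegral_indicator hBa, setIntegral_const, smul_eq_mul, mul_one, measureReal_def]
      have h2 : ∫ ω in A, (μ[(B a).indicator (fun _ => (1:ℝ)) | 𝓕 (a-1)]) ω ∂μ
          = ∫ ω in A, (B a).indicator (fun _ => (1:ℝ)) ω ∂μ :=
        setIntegral_condExp (hFm (a-1) (by omega)) hInd hAmeas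
      have h3 : ∫ ω in A, (μ[(B a).indicator (fun _ => (1:ℝ)) | 𝓕 (a-1)]) ω ∂μ
          ≤ ∫ ω in A, p a ∂μ :=
        setIntegral_mono_ae integrable_condExp.integrableOn (integrable_const _).integrableOn
          (hcond a ha_mem)
      have h4 : ∫ ω in A, p a ∂μ = (μ A).toReal * p a := by
        rw [setIntegral_const, smul_eq_mul, measureReal_def]
      have hprod : (0:ℝ) ≤ ∏ t ∈ s, p t :=
        Finset.prod_nonneg fun t ht => (hp t (hss ht)).1
      have hpa : 0 ≤ p a := (hp a ha_mem).1
      have hμA : (μ A).toReal ≤ ∏ t ∈ s, p t :=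
        ENNReal.toReal_le_of_le_ofReal hprod (ih hss)
      have hfin : (μ (A ∩ B a)).toReal ≤ p a * ∏ t ∈ s, p t := by
        calc (μ (A ∩ B a)).toReal ≤ (μ A).toReal * p a := by rw [← h1, ← h2]; linarith [h3, h4]
          _ ≤ (∏ t ∈ s, p t) * p a := mul_le_mul_of_nonneg_right hμA hpa
          _ = p a * ∏ t ∈ s, p t := mul_comm _ _
      rw [Finset.set_biInter_insert, Finset.prod_insert haS]
      rw [Set.inter_comm] at hfin
      exact (ENNReal.le_ofReal_iff_toReal_le (measure_ne_top μ _)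
        (mul_nonneg hpa hprod)).mpr hfin
  have hnn : ∀ t ∈ Finset.Icc 1 n, 0 ≤ p t := fun t ht => (hp t ht).1
  have hsub : {ω | (k : ℝ) ≤ ∑ t ∈ Finset.Icc 1 n, (B t).indicator (fun _ => (1 : ℝ)) ω}
      ⊆ ⋃ S ∈ Finset.powersetCard k (Finset.Icc 1 n), ⋂ t ∈ S, B t := by
    intro ω hω
    simp only [Set.mem_setOf_eq] at hω
    have hcount : ∑ t ∈ Finset.Icc 1 n, (B t).indicator (fun _ => (1:ℝ)) ω
        = (((Finset.Icc 1 n).filter (fun t => ω ∈ B t)).card : ℝ) := by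
      rw [Finset.card_filter]
      push_cast
      refine Finset.sum_congr rfl fun t _ => ?_
      by_cases h : ω ∈ B t <;> simp [Set.indicator_apply, h]
    rw [hcount] at hω
    have hk : k ≤ ((Finset.Icc 1 n).filter (fun t => ω ∈ B t)).card := by exact_mod_cast hω
    obtain ⟨S, hS1, hS2⟩ := Finset.exists_subset_card_eq hk
    refine Set.mem_iUnion₂.mpr ⟨S, ?_, ?_⟩
    · exact Finset.mem_powersetCard.mpr ⟨hS1.trans (Finset.filter_subset _ _), hS2⟩
    · exact Set.mem_iInter₂.mpr fun t ht => (Finset.mem_filter.mp (hS1 ht)).2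
  calc μ {ω | (k : ℝ) ≤ ∑ t ∈ Finset.Icc 1 n, (B t).indicator (fun _ => (1 : ℝ)) ω}
      ≤ μ (⋃ S ∈ Finset.powersetCard k (Finset.Icc 1 n), ⋂ t ∈ S, B t) := measure_mono hsub
    _ ≤ ∑ S ∈ Finset.powersetCard k (Finset.Icc 1 n), μ (⋂ t ∈ S, B t) :=
        measure_biUnion_finset_le _ _
    _ ≤ ∑ S ∈ Finset.powersetCard k (Finset.Icc 1 n), ENNReal.ofReal (∏ t ∈ S, p t) :=
        Finset.sum_le_sum fun S hS => key S (Finset.mem_powersetCard.mp hS).1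
    _ = ENNReal.ofReal (∑ S ∈ Finset.powersetCard k (Finset.Icc 1 n), ∏ t ∈ S, p t) :=
        (ENNReal.ofReal_sum_of_nonneg fun S hS => Finset.prod_nonneg fun t ht =>
          hnn t ((Finset.mem_powersetCard.mp hS).1 ht)).symm
    _ ≤ ENNReal.ofReal ((∑ t ∈ Finset.Icc 1 n, p t) ^ k / k.factorial) := by
        apply ENNReal.ofReal_le_ofReal
        rw [le_div_iff₀ (by positivity : (0:ℝ) < (k.factorial : ℝ))]
        linarith [esymm_bound p (Finset.Icc 1 n) hnn k]
end
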